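/- Let G be a finite p-group acting on V over a field k of characteristic p, dim(V^G) = l, and let 𝒳 be any set of proper subgroups of G. Choose a basis v_1,...,v_l of V^G extended to a basis of V with dual basis x_1,...,x_n, and set N_i = Π_{σ∈G} σ·x_i for 1 ≤ i ≤ l. Then the images of N_1, ..., N_l form a regular sequence in the quotient ring k[V]^G / I^G_𝒳. In particular, depth(k[V]^G / I^G_𝒳) ≥ dim(V^G). -/

import Mathlib

open MvPolynomial

/-- The ring of `H`-invariants in `R`. -/
def invSub (G R : Type) [Group G] [CommRing R] [MulSemiringAction G R]
    (H : Subgroup G) : Subring R where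
  carrier := {f : R | ∀ h : H, (h : G) • f = f}
  mul_mem' := fun ha hb h => by rw [smul_mul', ha h, hb h]
  one_mem' := fun h => smul_one _
  add_mem' := fun ha hb h => by rw [smul_add, ha h, hb h]
  zero_mem' := fun h => smul_zero _
  neg_mem' := fun ha h => by rw [smul_neg, (ha h : _)]

/-- The relative transfer `Tr^H_K`, summing over representatives of `H/K`. -/
noncomputable def relTransfer (G R : Type) [Group G] [Finite G] [CommRing R]
    [MulSemiringAction G R] (H K : Subgroup G) (f : R) : R :=
  haveI : Fintype (H ⧸ K.subgroupOf H) := Fintype.ofFinite _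
  ∑ c : H ⧸ K.subgroupOf H, ((Quotient.out c : H) : G) • f

/-- The transfer ideal `I^G_𝒳 = Σ_{X ∈ 𝒳} Tr^G_X(k[V]^X)` of `k[V]^G`. -/
noncomputable def transferIdealFamily (G R : Type) [Group G] [Finite G] [CommRing R]
    [MulSemiringAction G R] (𝓧 : Set (Subgroup G)) : Ideal (invSub G R ⊤) :=
  Ideal.span {y | ∃ X ∈ 𝓧, ∃ f : R, (∀ x : X, (x : G) • f = f) ∧
    (y : R) = relTransfer G R ⊤ X f}

/-- The norm `Nᵢ = Π_{σ∈G} σ·xᵢ`, as an element of `k[V]^G`. -/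
noncomputable def normElt (k : Type) [Field k] (n : ℕ) (G : Type) [Group G] [Fintype G]
    [MulSemiringAction G (MvPolynomial (Fin n) k)] (i : Fin n) :
    invSub G (MvPolynomial (Fin n) k) ⊤ :=
  ⟨∏ σ : G, σ • (X i : MvPolynomial (Fin n) k), by
    intro τ
    have h1 : (τ : G) • (∏ σ : G, σ • (X i : MvPolynomial (Fin n) k)) =
        ∏ σ : G, (τ : G) • σ • (X i : MvPolynomial (Fin n) k) :=
      map_prod (MulSemiringAction.toRingHom G _ (τ : G)) _ _
    rw [h1]
    exact Fintype.prod_equiv (Equiv.mulLeft (τ : G)) _ _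
      (fun σ => (mul_smul (τ : G) σ _).symm)⟩

set_option linter.unusedSectionVars false
set_option maxHeartbeats 1000000
set_option synthInstance.maxHeartbeats 400000



namespace Statement6Digits

variable {R' : Type*} [CommRing R'] [Nontrivial R'] (NN : Polynomial R')

/-- iterated division by `NN` -/
noncomputable def itd (d : ℕ) (h : Polynomial R') : Polynomial R' :=
  (· /ₘ NN)^[d] h

/-- `d`-th `NN`-adic digit -/
noncomputable def dig (d : ℕ) (h : Polynomial R') : Polynomial R' :=
  itd NN d h %ₘ NN

lemma itd_zero (h : Polynomial R') : itd NN 0 h = h := rfl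

lemma itd_succ (d : ℕ) (h : Polynomial R') : itd NN (d + 1) h = itd NN d (h /ₘ NN) :=
  Function.iterate_succ_apply _ _ _

lemma itd_succ' (d : ℕ) (h : Polynomial R') : itd NN (d + 1) h = itd NN d h /ₘ NN :=
  Function.iterate_succ_apply' _ _ _

lemma itd_zero_poly (d : ℕ) : itd NN d 0 = 0 := by
  induction d with
  | zero => rfl
  | succ d ih => rw [itd_succ, Polynomial.zero_divByMonic, ih]

lemma dig_zero_poly (d : ℕ) : dig NN d 0 = 0 := by
  rw [dig, itd_zero_poly, Polynomial.zero_modByMonic]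

variable (hmon : NN.Monic) (hdeg : 0 < NN.degree)
include hmon

lemma dig_degree (d : ℕ) (h : Polynomial R') : (dig NN d h).degree < NN.degree :=
  Polynomial.degree_modByMonic_lt _ hmon

lemma sum_dig (D : ℕ) (h : Polynomial R') :
    h = (∑ d ∈ Finset.range D, dig NN d h * NN ^ d) + itd NN D h * NN ^ D := by
  induction D with
  | zero => simp [itd_zero]
  | succ D ih =>
      rw [Finset.sum_range_succ]
      have hsplit : itd NN D h = dig NN D h + NN * itd NN (D + 1) h := by
        rw [dig, itd_succ']
        exact (Polynomial.modByMonic_add_div _ NN).symm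
      calc h = (∑ d ∈ Finset.range D, dig NN d h * NN ^ d) + itd NN D h * NN ^ D := ih
        _ = _ := by rw [hsplit]; ring

include hdeg in
lemma itd_eq_zero_of_natDegree_le (m : ℕ) (h : Polynomial R') (hh : h.natDegree ≤ m) :
    itd NN (m + 1) h = 0 := by
  induction m generalizing h with
  | zero =>
      rw [itd_succ, itd_zero, Polynomial.divByMonic_eq_zero_iff hmon]
      calc h.degree ≤ (h.natDegree : WithBot ℕ) := Polynomial.degree_le_natDegree
        _ ≤ (0 : ℕ) := by exact_mod_cast hh
        _ < NN.degree := hdeg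
  | succ m ih =>
      by_cases h0 : h /ₘ NN = 0
      · rw [itd_succ, h0, itd_zero_poly]
      · have hne : h ≠ 0 := by
          intro hc; rw [hc, Polynomial.zero_divByMonic] at h0; exact h0 rfl
        have hlt : (h /ₘ NN).degree < h.degree :=
          Polynomial.degree_divByMonic_lt _ NN hne hdeg
        have : (h /ₘ NN).natDegree ≤ m := by
          have := Polynomial.natDegree_lt_natDegree h0 hlt
          omega
        rw [itd_succ]
        exact ih _ this

lemma divmod_add (a b : Polynomial R') :
    (a + b) /ₘ NN = a /ₘ NN + b /ₘ NN ∧ (a + b) %ₘ NN = a %ₘ NN + b %ₘ NN := by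
  apply Polynomial.div_modByMonic_unique _ _ hmon
  constructor
  · have ha := Polynomial.modByMonic_add_div a NN
    have hb := Polynomial.modByMonic_add_div b NN
    calc a %ₘ NN + b %ₘ NN + NN * (a /ₘ NN + b /ₘ NN)
        = (a %ₘ NN + NN * (a /ₘ NN)) + (b %ₘ NN + NN * (b /ₘ NN)) := by ring
      _ = a + b := by rw [ha, hb]
  · calc (a %ₘ NN + b %ₘ NN).degree ≤ max (a %ₘ NN).degree (b %ₘ NN).degree :=
        Polynomial.degree_add_le _ _
      _ < NN.degree := max_lt (Polynomial.degree_modByMonic_lt _ hmon)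
          (Polynomial.degree_modByMonic_lt _ hmon)

lemma itd_add (d : ℕ) (a b : Polynomial R') :
    itd NN d (a + b) = itd NN d a + itd NN d b := by
  induction d generalizing a b with
  | zero => rfl
  | succ d ih =>
      rw [itd_succ, itd_succ NN d a, itd_succ NN d b, (divmod_add NN hmon a b).1]
      exact ih _ _

lemma dig_add (d : ℕ) (a b : Polynomial R') :
    dig NN d (a + b) = dig NN d a + dig NN d b := by
  rw [dig, dig, dig, itd_add NN hmon, (divmod_add NN hmon _ _).2]

lemma divmod_C_mul (a : R') (h : Polynomial R') :
    Polynomial.C a * h /ₘ NN = Polynomial.C a * (h /ₘ NN) ∧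
      Polynomial.C a * h %ₘ NN = Polynomial.C a * (h %ₘ NN) := by
  apply Polynomial.div_modByMonic_unique _ _ hmon
  constructor
  · calc Polynomial.C a * (h %ₘ NN) + NN * (Polynomial.C a * (h /ₘ NN))
        = Polynomial.C a * (h %ₘ NN + NN * (h /ₘ NN)) := by ring
      _ = Polynomial.C a * h := by rw [Polynomial.modByMonic_add_div _ NN]
  · calc (Polynomial.C a * (h %ₘ NN)).degree
        ≤ (Polynomial.C a).degree + (h %ₘ NN).degree := Polynomial.degree_mul_le _ _
      _ ≤ 0 + (h %ₘ NN).degree := add_le_add Polynomial.degree_C_le le_rfl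
      _ = (h %ₘ NN).degree := zero_add _
      _ < NN.degree := Polynomial.degree_modByMonic_lt _ hmon

lemma itd_C_mul (d : ℕ) (a : R') (h : Polynomial R') :
    itd NN d (Polynomial.C a * h) = Polynomial.C a * itd NN d h := by
  induction d generalizing h with
  | zero => rfl
  | succ d ih => rw [itd_succ, itd_succ NN d h, (divmod_C_mul NN hmon a h).1, ih]

lemma dig_C_mul (d : ℕ) (a : R') (h : Polynomial R') :
    dig NN d (Polynomial.C a * h) = Polynomial.C a * dig NN d h := by
  rw [dig, dig, itd_C_mul NN hmon, (divmod_C_mul NN hmon _ _).2]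

include hdeg in
lemma divmod_shift (h : Polynomial R') :
    NN * h /ₘ NN = h ∧ NN * h %ₘ NN = 0 := by
  apply Polynomial.div_modByMonic_unique _ _ hmon
  refine ⟨by ring, ?_⟩
  rw [Polynomial.degree_zero]
  exact lt_of_lt_of_le (by exact WithBot.bot_lt_coe 0) (le_of_lt hdeg)

include hdeg in
lemma dig_shift (d : ℕ) (h : Polynomial R') :
    dig NN (d + 1) (NN * h) = dig NN d h := by
  rw [dig, dig, itd_succ, (divmod_shift NN hmon hdeg h).1]

/-- digits commute with nice ring endomorphism-like maps -/
lemma divmod_hom (ψ : Polynomial R' → Polynomial R')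
    (ψadd : ∀ a b, ψ (a + b) = ψ a + ψ b) (ψmul : ∀ a b, ψ (a * b) = ψ a * ψ b)
    (ψN : ψ NN = NN) (ψdeg : ∀ h, (ψ h).degree ≤ h.degree) (h : Polynomial R') :
    ψ h /ₘ NN = ψ (h /ₘ NN) ∧ ψ h %ₘ NN = ψ (h %ₘ NN) := by
  apply Polynomial.div_modByMonic_unique _ _ hmon
  constructor
  · calc ψ (h %ₘ NN) + NN * ψ (h /ₘ NN) = ψ (h %ₘ NN) + ψ NN * ψ (h /ₘ NN) := by rw [ψN]
      _ = ψ (h %ₘ NN + NN * (h /ₘ NN)) := by rw [ψadd, ψmul]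
      _ = ψ h := by rw [Polynomial.modByMonic_add_div _ NN]
  · exact lt_of_le_of_lt (ψdeg _) (Polynomial.degree_modByMonic_lt _ hmon)

lemma itd_hom (ψ : Polynomial R' → Polynomial R')
    (ψadd : ∀ a b, ψ (a + b) = ψ a + ψ b) (ψmul : ∀ a b, ψ (a * b) = ψ a * ψ b)
    (ψN : ψ NN = NN) (ψdeg : ∀ h, (ψ h).degree ≤ h.degree) (d : ℕ) (h : Polynomial R') :
    itd NN d (ψ h) = ψ (itd NN d h) := by
  induction d generalizing h with
  | zero => rfl
  | succ d ih =>
      rw [itd_succ, itd_succ NN d h, (divmod_hom NN hmon ψ ψadd ψmul ψN ψdeg h).1, ih]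

lemma dig_hom (ψ : Polynomial R' → Polynomial R')
    (ψadd : ∀ a b, ψ (a + b) = ψ a + ψ b) (ψmul : ∀ a b, ψ (a * b) = ψ a * ψ b)
    (ψN : ψ NN = NN) (ψdeg : ∀ h, (ψ h).degree ≤ h.degree) (d : ℕ) (h : Polynomial R') :
    dig NN d (ψ h) = ψ (dig NN d h) := by
  rw [dig, dig, itd_hom NN hmon ψ ψadd ψmul ψN ψdeg,
    (divmod_hom NN hmon ψ ψadd ψmul ψN ψdeg _).2]

end Statement6Digits

namespace Statement6Aux

variable {k : Type} [Field k] {n : ℕ}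

/-- a `Finsupp` of total weight 1 is a single -/
lemma single_of_weight_one {m : Fin n →₀ ℕ} (h : (Finsupp.weight (1 : Fin n → ℕ)) m = 1) :
    ∃ w, m = Finsupp.single w 1 := by
  have hsum : ∑ i ∈ m.support, m i = 1 := by
    rw [Finsupp.weight_apply] at h
    simpa [Finsupp.sum, smul_eq_mul] using h
  have hne : m.support.Nonempty := by
    by_contra hc
    rw [Finset.not_nonempty_iff_eq_empty] at hc
    rw [hc] at hsum
    simp at hsum
  obtain ⟨a, ha⟩ := hne
  have hma : m a = 1 := by
    have h1 : m a ≤ 1 := by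
      rw [← hsum]
      exact Finset.single_le_sum (fun i _ => Nat.zero_le _) ha
    have h2 : m a ≠ 0 := Finsupp.mem_support_iff.1 ha
    omega
  have hrest : ∀ b ∈ m.support, b ≠ a → m b = 0 := by
    intro b hb hba
    have hsplit := Finset.sum_eq_add_sum_sdiff_singleton_of_mem ha (fun i => m i)
    rw [hsplit, hma] at hsum
    have : ∑ i ∈ m.support \ {a}, m i = 0 := by omega
    have hb' : b ∈ m.support \ {a} := Finset.mem_sdiff.2 ⟨hb, by simp [hba]⟩
    exact (Finset.sum_eq_zero_iff).1 this b hb'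
  refine ⟨a, ?_⟩
  ext b
  by_cases hb : b = a
  · subst hb; simp [hma]
  · rw [Finsupp.single_apply, if_neg (fun hc => hb hc.symm)]
    by_cases hbs : b ∈ m.support
    · exact hrest b hbs hb
    · exact Finsupp.notMem_support_iff.1 hbs

/-- a homogeneous polynomial of degree 1 is a linear combination of the variables -/
lemma eq_sum_single_of_isHomog {f : MvPolynomial (Fin n) k} (hf : f.IsHomogeneous 1) :
    f = ∑ w : Fin n, coeff (Finsupp.single w 1) f • X w := by
  apply MvPolynomial.ext
  intro d
  rw [coeff_sum]
  simp only [coeff_smul, coeff_X', smul_eq_mul]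
  by_cases hd : ∃ w, d = Finsupp.single w 1
  · obtain ⟨w₀, rfl⟩ := hd
    rw [Finset.sum_eq_single w₀]
    · rw [if_pos rfl, mul_one]
    · intro b _ hb
      rw [if_neg, mul_zero]
      exact fun hcon => hb (Finsupp.single_left_injective one_ne_zero hcon)
    · intro h; exact absurd (Finset.mem_univ w₀) h
  · push_neg at hd
    have h0 : coeff d f = 0 := by
      by_contra hc
      obtain ⟨w, hw⟩ := single_of_weight_one (hf hc)
      exact hd w hw
    rw [h0]
    symm
    apply Finset.sum_eq_zero
    intro b _
    rw [if_neg (fun hcon => hd b hcon.symm), mul_zero]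

variable {G : Type} [Group G] [Fintype G]
  [MulSemiringAction G (MvPolynomial (Fin n) k)]
  [SMulCommClass G k (MvPolynomial (Fin n) k)]

/-- the equivalence separating out the variable `j` -/
def eOpt (j : Fin n) : Fin n ≃ Option {w : Fin n // w ≠ j} where
  toFun i := if h : i = j then none else some ⟨i, h⟩
  invFun o := Option.elim o j Subtype.val
  left_inv i := by by_cases h : i = j <;> simp [h]
  right_inv o := by
    cases o with
    | none => simp
    | some w => simp [w.2]

lemma sum_fin_split {M : Type*} [AddCommMonoid M] (j : Fin n) (F : Fin n → M) :
    ∑ w : Fin n, F w = F j + ∑ w : {w : Fin n // w ≠ j}, F w.1 := by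
  rw [← Equiv.sum_comp (eOpt j).symm F]
  rw [Fintype.sum_option]
  rfl

variable (j : Fin n)

/-- inclusion of the polynomial ring on the other variables -/
noncomputable def χ : MvPolynomial {w : Fin n // w ≠ j} k →ₐ[k] MvPolynomial (Fin n) k :=
  rename Subtype.val

/-- the coefficients of `σ • X i` on the variables other than `j` -/
noncomputable def ρ (σ : G) (i : Fin n) : MvPolynomial {w : Fin n // w ≠ j} k :=
  ∑ w : {w : Fin n // w ≠ j},
    coeff (Finsupp.single w.1 1) (σ • (X i : MvPolynomial (Fin n) k)) • X w

section CoFixed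

variable (hlin : ∀ (σ : G) (i : Fin n),
    (σ • (X i : MvPolynomial (Fin n) k)).IsHomogeneous 1)

include hlin

lemma chi_rho {σ : G} {i : Fin n} (hi : i ≠ j)
    (hz : coeff (Finsupp.single j 1) (σ • (X i : MvPolynomial (Fin n) k)) = 0) :
    σ • (X i : MvPolynomial (Fin n) k) = χ j (ρ j σ i) := by
  rw [χ, ρ, map_sum]
  conv_lhs => rw [eq_sum_single_of_isHomog (hlin σ i)]
  rw [sum_fin_split j, hz, zero_smul, zero_add]
  apply Finset.sum_congr rfl
  intro w _
  rw [map_smul, rename_X]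

lemma chi_rho_j {σ : G}
    (ho : coeff (Finsupp.single j 1) (σ • (X j : MvPolynomial (Fin n) k)) = 1) :
    σ • (X j : MvPolynomial (Fin n) k) = X j + χ j (ρ j σ j) := by
  rw [χ, ρ, map_sum]
  conv_lhs => rw [eq_sum_single_of_isHomog (hlin σ j)]
  rw [sum_fin_split j, ho, one_smul]
  congr 1
  apply Finset.sum_congr rfl
  intro w _
  rw [map_smul, rename_X]

end CoFixed

section Phi

/-- the isomorphism `k[x] ≅ (k[others])[x_j]` -/
noncomputable def φe : MvPolynomial (Fin n) k ≃ₐ[k]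
    Polynomial (MvPolynomial {w : Fin n // w ≠ j} k) :=
  (renameEquiv k (eOpt j)).trans (optionEquivLeft k {w : Fin n // w ≠ j})

lemma φe_X_j : φe j (X j : MvPolynomial (Fin n) k) = Polynomial.X := by
  rw [φe, AlgEquiv.trans_apply, renameEquiv_apply, rename_X]
  have : eOpt j j = none := by simp [eOpt]
  rw [this, optionEquivLeft_X_none]

lemma φe_X_ne {i : Fin n} (hi : i ≠ j) :
    φe j (X i : MvPolynomial (Fin n) k) = Polynomial.C (X ⟨i, hi⟩) := by
  rw [φe, AlgEquiv.trans_apply, renameEquiv_apply, rename_X]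
  have : eOpt j i = some ⟨i, hi⟩ := by simp [eOpt, hi]
  rw [this, optionEquivLeft_X_some]

/-- `C` as a `k`-algebra hom -/
noncomputable def myC : MvPolynomial {w : Fin n // w ≠ j} k →ₐ[k]
    Polynomial (MvPolynomial {w : Fin n // w ≠ j} k) :=
  { Polynomial.C with
    commutes' := fun c => by
      simp [Polynomial.algebraMap_apply] }

lemma myC_apply (a : MvPolynomial {w : Fin n // w ≠ j} k) : myC j a = Polynomial.C a := rfl

lemma φe_chi (a : MvPolynomial {w : Fin n // w ≠ j} k) :
    φe j (χ j a) = Polynomial.C a := by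
  have : ((φe (k := k) j).toAlgHom.comp (χ (k := k) j)) = myC (k := k) j := by
    apply MvPolynomial.algHom_ext
    intro w
    rw [AlgHom.comp_apply, myC_apply]
    show φe j (χ j (X w)) = _
    rw [χ, rename_X]
    exact φe_X_ne j w.2
  calc φe j (χ j a) = ((φe j).toAlgHom.comp (χ j)) a := rfl
    _ = Polynomial.C a := by rw [this, myC_apply]

lemma φe_symm_C (a : MvPolynomial {w : Fin n // w ≠ j} k) :
    (φe j).symm (Polynomial.C a) = χ j a := by
  rw [← φe_chi j a, AlgEquiv.symm_apply_apply]

lemma φe_symm_X : (φe j).symm Polynomial.X = (X j : MvPolynomial (Fin n) k) := by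
  rw [← φe_X_j j, AlgEquiv.symm_apply_apply]

end Phi

section SmulChi

variable (hlin : ∀ (σ : G) (i : Fin n),
    (σ • (X i : MvPolynomial (Fin n) k)).IsHomogeneous 1)
  (hne : ∀ (σ : G) (i : Fin n), i ≠ j →
    coeff (Finsupp.single j 1) (σ • (X i : MvPolynomial (Fin n) k)) = 0)

include hlin hne

/-- the ring of the other variables is stable under the action -/
lemma smul_chi (σ : G) (a : MvPolynomial {w : Fin n // w ≠ j} k) :
    ∃ b, σ • χ j a = χ j b := by
  induction a using MvPolynomial.induction_on with
  | C c =>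
      refine ⟨C c, ?_⟩
      have h1 : (χ j) (C c) = (C c : MvPolynomial (Fin n) k) := rename_C _ _
      rw [h1]
      have h2 : (C c : MvPolynomial (Fin n) k) = c • (1 : MvPolynomial (Fin n) k) := by
        rw [smul_eq_C_mul, mul_one]
      rw [h2, smul_comm, smul_one]
  | add p q hp hq =>
      obtain ⟨b₁, hb₁⟩ := hp
      obtain ⟨b₂, hb₂⟩ := hq
      exact ⟨b₁ + b₂, by rw [map_add, smul_add, hb₁, hb₂, map_add]⟩
  | mul_X p w hp =>
      obtain ⟨b, hb⟩ := hp
      refine ⟨b * ρ j σ w.1, ?_⟩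
      rw [map_mul, smul_mul', hb, map_mul]
      congr 1
      rw [χ, rename_X]
      exact chi_rho j hlin w.2 (hne σ w.1 w.2)

end SmulChi

section NormAndTransport

/-- the norm polynomial -/
noncomputable def NP : MvPolynomial (Fin n) k := ∏ σ : G, σ • (X j : MvPolynomial (Fin n) k)

lemma NP_inv (τ : G) : τ • NP (k := k) (G := G) j = NP (k := k) (G := G) j := by
  rw [NP]
  have h1 : τ • (∏ σ : G, σ • (X j : MvPolynomial (Fin n) k)) =
      ∏ σ : G, τ • σ • (X j : MvPolynomial (Fin n) k) :=
    map_prod (MulSemiringAction.toRingHom G _ τ) _ _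
  rw [h1]
  exact Fintype.prod_equiv (Equiv.mulLeft τ) _ _ (fun σ => (mul_smul τ σ _).symm)

/-- the image of the norm in the polynomial ring over the other variables -/
noncomputable def NN : Polynomial (MvPolynomial {w : Fin n // w ≠ j} k) :=
  φe j (NP (k := k) (G := G) j)

/-- the conjugated action on the one-variable polynomial ring -/
noncomputable def tmr (σ : G) :
    Polynomial (MvPolynomial {w : Fin n // w ≠ j} k) →+*
      Polynomial (MvPolynomial {w : Fin n // w ≠ j} k) :=
  ((φe (k := k) j).toAlgHom.toRingHom).comp
    ((MulSemiringAction.toRingHom G (MvPolynomial (Fin n) k) σ).comp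
      ((φe (k := k) j).symm.toAlgHom.toRingHom))

lemma tmr_apply (σ : G) (h : Polynomial (MvPolynomial {w : Fin n // w ≠ j} k)) :
    tmr j σ h = φe j (σ • (φe j).symm h) := rfl

lemma tmr_NN (σ : G) : tmr j σ (NN (k := k) (G := G) j) = NN (k := k) (G := G) j := by
  rw [tmr_apply, NN, AlgEquiv.symm_apply_apply, NP_inv]

lemma tmr_phi (σ : G) (f : MvPolynomial (Fin n) k) : tmr j σ (φe j f) = φe j (σ • f) := by
  rw [tmr_apply, AlgEquiv.symm_apply_apply]

lemma φe_symm_tmr (σ : G) (h : Polynomial (MvPolynomial {w : Fin n // w ≠ j} k)) :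
    (φe j).symm (tmr j σ h) = σ • (φe j).symm h := by
  rw [tmr_apply, AlgEquiv.symm_apply_apply]

section WithHyps

variable (hlin : ∀ (σ : G) (i : Fin n),
    (σ • (X i : MvPolynomial (Fin n) k)).IsHomogeneous 1)
  (hne : ∀ (σ : G) (i : Fin n), i ≠ j →
    coeff (Finsupp.single j 1) (σ • (X i : MvPolynomial (Fin n) k)) = 0)
  (ho : ∀ σ : G, coeff (Finsupp.single j 1) (σ • (X j : MvPolynomial (Fin n) k)) = 1)

include hlin ho in
lemma NN_eq : NN (k := k) (G := G) j = ∏ σ : G, (Polynomial.X + Polynomial.C (ρ j σ j)) := by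
  rw [NN, NP, map_prod]
  apply Finset.prod_congr rfl
  intro σ _
  rw [chi_rho_j j hlin (ho σ), map_add, φe_X_j, φe_chi]

include hlin ho in
lemma NN_monic : (NN (k := k) (G := G) j).Monic := by
  rw [NN_eq j hlin ho]
  exact Polynomial.monic_prod_of_monic _ _ (fun σ _ => Polynomial.monic_X_add_C _)

include hlin ho in
lemma NN_deg : 0 < (NN (k := k) (G := G) j).degree := by
  rw [← Polynomial.natDegree_pos_iff_degree_pos, NN_eq j hlin ho,
    Polynomial.natDegree_prod_of_monic _ _ (fun σ _ => Polynomial.monic_X_add_C _)]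
  simp only [Polynomial.natDegree_X_add_C]
  simp [Finset.card_univ, Fintype.card_pos]

include hlin hne ho in
lemma tmr_deg (σ : G) (h : Polynomial (MvPolynomial {w : Fin n // w ≠ j} k)) :
    (tmr j σ h).degree ≤ h.degree := by
  conv_lhs => rw [h.as_sum_support]
  rw [map_sum]
  refine le_trans (Polynomial.degree_sum_le _ _) ?_
  rw [Polynomial.degree, Finset.max_eq_sup_coe]
  apply Finset.sup_mono_fun
  intro s hs
  -- bound each term
  rw [← Polynomial.C_mul_X_pow_eq_monomial, map_mul, map_pow]
  have hX : tmr (k := k) j σ Polynomial.X = Polynomial.X + Polynomial.C (ρ j σ j) := by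
    rw [tmr_apply, φe_symm_X, chi_rho_j j hlin (ho σ), map_add, φe_X_j, φe_chi]
  have hC : ∃ b, tmr j σ (Polynomial.C (h.coeff s)) = Polynomial.C b := by
    obtain ⟨b, hb⟩ := smul_chi j hlin hne σ (h.coeff s)
    exact ⟨b, by rw [tmr_apply, φe_symm_C, hb, φe_chi]⟩
  obtain ⟨b, hb⟩ := hC
  rw [hb, hX]
  set XC : Polynomial (MvPolynomial {w : Fin n // w ≠ j} k) :=
    Polynomial.X + Polynomial.C (ρ j σ j) with hXC
  have hmon : XC.Monic := Polynomial.monic_X_add_C _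
  have hdegpow : (XC ^ s).degree = (s : WithBot ℕ) := by
    rw [Polynomial.degree_eq_natDegree (hmon.pow _).ne_zero, hmon.natDegree_pow,
      hXC, Polynomial.natDegree_X_add_C, mul_one]
  calc (Polynomial.C b * XC ^ s).degree
      ≤ (Polynomial.C b).degree + (XC ^ s).degree := Polynomial.degree_mul_le _ _
    _ ≤ 0 + (s : WithBot ℕ) := by
        rw [hdegpow]
        exact add_le_add Polynomial.degree_C_le le_rfl
    _ = (s : WithBot ℕ) := zero_add _

end WithHyps

end NormAndTransport

section Edig

open Statement6Digits

/-- the `d`-th digit of the `N_j`-adic expansion, as an operation on `k[V]` -/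
noncomputable def Edig (d : ℕ) (f : MvPolynomial (Fin n) k) : MvPolynomial (Fin n) k :=
  (φe j).symm (dig (NN (k := k) (G := G) j) d (φe j f))

lemma Edig_zero (d : ℕ) : Edig (k := k) (G := G) j d 0 = 0 := by
  rw [Edig, map_zero, dig_zero_poly, map_zero]

variable (hmon : (NN (k := k) (G := G) j).Monic)
include hmon

lemma Edig_add (d : ℕ) (f g : MvPolynomial (Fin n) k) :
    Edig (G := G) j d (f + g) = Edig (G := G) j d f + Edig (G := G) j d g := by
  rw [Edig, Edig, Edig, map_add, dig_add _ hmon, map_add]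

lemma Edig_sum {ι : Type*} (d : ℕ) (s : Finset ι) (F : ι → MvPolynomial (Fin n) k) :
    Edig (G := G) j d (∑ x ∈ s, F x) = ∑ x ∈ s, Edig (G := G) j d (F x) := by
  classical
  induction s using Finset.induction_on with
  | empty => simp [Edig_zero]
  | insert _ _ hx ih =>
      rw [Finset.sum_insert hx, Finset.sum_insert hx, Edig_add j hmon, ih]

lemma Edig_chi_mul (d : ℕ) (b : MvPolynomial {w : Fin n // w ≠ j} k)
    (f : MvPolynomial (Fin n) k) :
    Edig (G := G) j d (χ j b * f) = χ j b * Edig (G := G) j d f := by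
  rw [Edig, Edig, map_mul, φe_chi, dig_C_mul _ hmon, map_mul, φe_symm_C]

lemma Edig_smul
    (hlin : ∀ (σ : G) (i : Fin n), (σ • (X i : MvPolynomial (Fin n) k)).IsHomogeneous 1)
    (hne : ∀ (σ : G) (i : Fin n), i ≠ j →
      coeff (Finsupp.single j 1) (σ • (X i : MvPolynomial (Fin n) k)) = 0)
    (ho : ∀ σ : G, coeff (Finsupp.single j 1) (σ • (X j : MvPolynomial (Fin n) k)) = 1)
    (d : ℕ) (σ : G) (f : MvPolynomial (Fin n) k) :
    Edig (G := G) j d (σ • f) = σ • Edig (G := G) j d f := by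
  rw [Edig, Edig, ← tmr_phi,
    dig_hom _ hmon (tmr (k := k) j σ) (map_add _) (map_mul _) (tmr_NN j σ)
      (tmr_deg j hlin hne ho σ), φe_symm_tmr]

variable (hdeg : 0 < (NN (k := k) (G := G) j).degree)
include hdeg

lemma Edig_NP_shift (d : ℕ) (f : MvPolynomial (Fin n) k) :
    Edig (G := G) j (d + 1) (NP (k := k) (G := G) j * f) = Edig (G := G) j d f := by
  rw [Edig, Edig, map_mul]
  have : φe j (NP (k := k) (G := G) j) = NN (k := k) (G := G) j := rfl
  rw [this, dig_shift _ hmon hdeg]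

lemma Edig_repr (f : MvPolynomial (Fin n) k) :
    f = ∑ d ∈ Finset.range ((φe j f).natDegree + 1),
      Edig (G := G) j d f * (NP (k := k) (G := G) j) ^ d := by
  have h1 := sum_dig (NN (k := k) (G := G) j) hmon ((φe j f).natDegree + 1) (φe j f)
  have h2 : itd (NN (k := k) (G := G) j) ((φe j f).natDegree + 1) (φe j f) = 0 :=
    itd_eq_zero_of_natDegree_le _ hmon hdeg _ _ le_rfl
  rw [h2, zero_mul, add_zero] at h1
  have h3 : f = (φe j).symm (φe j f) := (AlgEquiv.symm_apply_apply _ _).symm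
  calc f = (φe j).symm (φe j f) := h3
    _ = (φe j).symm (∑ d ∈ Finset.range ((φe j f).natDegree + 1),
          dig (NN (k := k) (G := G) j) d (φe j f) * (NN (k := k) (G := G) j) ^ d) := by
        rw [← h1]
    _ = _ := by
        rw [map_sum]
        have hsNN : (φe j).symm (NN (k := k) (G := G) j) = NP (k := k) (G := G) j :=
          AlgEquiv.symm_apply_apply _ _
        apply Finset.sum_congr rfl
        intro d _
        rw [map_mul, map_pow, hsNN]
        rfl

end Edig

section Alevel

variable {𝓧 : Set (Subgroup G)}

lemma norm_in_chi
    (hlin : ∀ (σ : G) (i : Fin n), (σ • (X i : MvPolynomial (Fin n) k)).IsHomogeneous 1)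
    (hne : ∀ (σ : G) (i : Fin n), i ≠ j →
      coeff (Finsupp.single j 1) (σ • (X i : MvPolynomial (Fin n) k)) = 0)
    (i : Fin n) (hij : i ≠ j) :
    ∃ b, ((normElt k n G i : invSub G (MvPolynomial (Fin n) k) ⊤) :
      MvPolynomial (Fin n) k) = χ j b := by
  refine ⟨∏ σ : G, ρ j σ i, ?_⟩
  have h0 : ((normElt k n G i : invSub G (MvPolynomial (Fin n) k) ⊤) :
      MvPolynomial (Fin n) k) = ∏ σ : G, σ • (X i : MvPolynomial (Fin n) k) := rfl
  rw [h0, map_prod]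
  exact Finset.prod_congr rfl (fun σ _ => chi_rho j hlin hij (hne σ i hij))

lemma mul_relTransfer (c f : MvPolynomial (Fin n) k) (hc : ∀ σ : G, σ • c = c)
    (Xs : Subgroup G) :
    c * relTransfer G (MvPolynomial (Fin n) k) ⊤ Xs f =
      relTransfer G (MvPolynomial (Fin n) k) ⊤ Xs (c * f) := by
  unfold relTransfer
  rw [Finset.mul_sum]
  apply Finset.sum_congr rfl
  intro cc _
  rw [smul_mul', hc]

lemma Edig_relTransfer (hmon : (NN (k := k) (G := G) j).Monic)
    (hlin : ∀ (σ : G) (i : Fin n), (σ • (X i : MvPolynomial (Fin n) k)).IsHomogeneous 1)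
    (hne : ∀ (σ : G) (i : Fin n), i ≠ j →
      coeff (Finsupp.single j 1) (σ • (X i : MvPolynomial (Fin n) k)) = 0)
    (ho : ∀ σ : G, coeff (Finsupp.single j 1) (σ • (X j : MvPolynomial (Fin n) k)) = 1)
    (d : ℕ) (Xs : Subgroup G) (f : MvPolynomial (Fin n) k) :
    Edig (G := G) j d (relTransfer G (MvPolynomial (Fin n) k) ⊤ Xs f) =
      relTransfer G (MvPolynomial (Fin n) k) ⊤ Xs (Edig (G := G) j d f) := by
  unfold relTransfer
  rw [Edig_sum j hmon]
  apply Finset.sum_congr rfl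
  intro cc _
  exact Edig_smul j hmon hlin hne ho d _ f

section WithAll

variable
  (hlin : ∀ (σ : G) (i : Fin n), (σ • (X i : MvPolynomial (Fin n) k)).IsHomogeneous 1)
  (hne : ∀ (σ : G) (i : Fin n), i ≠ j →
    coeff (Finsupp.single j 1) (σ • (X i : MvPolynomial (Fin n) k)) = 0)
  (ho : ∀ σ : G, coeff (Finsupp.single j 1) (σ • (X j : MvPolynomial (Fin n) k)) = 1)

/-- the digit operator on the ring of invariants -/
noncomputable def EdigA (d : ℕ) (a : invSub G (MvPolynomial (Fin n) k) ⊤) :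
    invSub G (MvPolynomial (Fin n) k) ⊤ :=
  ⟨Edig (G := G) j d (a : MvPolynomial (Fin n) k), by
    intro h
    rw [← Edig_smul j (NN_monic j hlin ho) hlin hne ho d (h : G) _, a.2 h]⟩

lemma EdigA_val (d : ℕ) (a : invSub G (MvPolynomial (Fin n) k) ⊤) :
    ((EdigA j hlin hne ho d a : invSub G (MvPolynomial (Fin n) k) ⊤) :
      MvPolynomial (Fin n) k) = Edig (G := G) j d (a : MvPolynomial (Fin n) k) := rfl

/-- the two generating sets -/
def S1 : Set (invSub G (MvPolynomial (Fin n) k) ⊤) :=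
  {y | ∃ i : Fin n, (i : ℕ) < (j : ℕ) ∧ y = normElt k n G i}

def S2 (𝓧 : Set (Subgroup G)) : Set (invSub G (MvPolynomial (Fin n) k) ⊤) :=
  {y | ∃ X ∈ 𝓧, ∃ f : MvPolynomial (Fin n) k, (∀ x : X, (x : G) • f = f) ∧
    (y : MvPolynomial (Fin n) k) = relTransfer G (MvPolynomial (Fin n) k) ⊤ X f}

lemma span_stable (𝓧 : Set (Subgroup G)) :
    ∀ t ∈ Ideal.span (S1 (G := G) j ∪ S2 (k := k) (G := G) 𝓧), ∀ (d : ℕ)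
      (c : invSub G (MvPolynomial (Fin n) k) ⊤),
      EdigA j hlin hne ho d (c * t) ∈ Ideal.span (S1 (G := G) j ∪ S2 (k := k) (G := G) 𝓧) := by
  have hmon := NN_monic j hlin ho
  intro t ht
  induction ht using Submodule.span_induction with
  | mem x hx =>
      intro d c
      rcases hx with hx1 | hx2
      · -- norm generator
        obtain ⟨i, hij', rfl⟩ := hx1
        have hij : i ≠ j := by
          intro hc
          subst hc
          exact lt_irrefl _ hij'
        obtain ⟨b, hb⟩ := norm_in_chi j hlin hne i hij
        have hkey : EdigA j hlin hne ho d (c * normElt k n G i) =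
            normElt k n G i * EdigA j hlin hne ho d c := by
          apply Subtype.ext
          rw [EdigA_val]
          have h1 : ((c * normElt k n G i : invSub G (MvPolynomial (Fin n) k) ⊤) :
              MvPolynomial (Fin n) k) =
              (c : MvPolynomial (Fin n) k) * (normElt k n G i : MvPolynomial (Fin n) k) := rfl
          rw [h1, hb, mul_comm ((c : MvPolynomial (Fin n) k)) (χ j b),
            Edig_chi_mul j hmon]
          have h2 : ((normElt k n G i * EdigA j hlin hne ho d c :
              invSub G (MvPolynomial (Fin n) k) ⊤) : MvPolynomial (Fin n) k) =
              (normElt k n G i : MvPolynomial (Fin n) k) *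
                Edig (G := G) j d (c : MvPolynomial (Fin n) k) := rfl
          rw [h2, hb]
        rw [hkey]
        exact Ideal.mul_mem_right _ _
          (Ideal.subset_span (Set.mem_union_left _ ⟨i, hij', rfl⟩))
      · -- transfer generator
        obtain ⟨Xs, hXs, f, hfinv, hval⟩ := hx2
        have hcinv : ∀ σ : G, σ • (c : MvPolynomial (Fin n) k) = (c : MvPolynomial (Fin n) k) :=
          fun σ => c.2 ⟨σ, trivial⟩
        have hval' : ((c * x : invSub G (MvPolynomial (Fin n) k) ⊤) :
            MvPolynomial (Fin n) k) = relTransfer G (MvPolynomial (Fin n) k) ⊤ Xs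
              ((c : MvPolynomial (Fin n) k) * f) := by
          have h1 : ((c * x : invSub G (MvPolynomial (Fin n) k) ⊤) :
              MvPolynomial (Fin n) k) =
              (c : MvPolynomial (Fin n) k) * (x : MvPolynomial (Fin n) k) := rfl
          rw [h1, hval]
          exact mul_relTransfer _ _ hcinv Xs
        have hginv : ∀ x' : Xs, (x' : G) • ((c : MvPolynomial (Fin n) k) * f) =
            (c : MvPolynomial (Fin n) k) * f := by
          intro x'
          rw [smul_mul', hcinv, hfinv]
        apply Ideal.subset_span
        right
        refine ⟨Xs, hXs, Edig (G := G) j d ((c : MvPolynomial (Fin n) k) * f), ?_, ?_⟩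
        · intro x'
          rw [← Edig_smul j hmon hlin hne ho d (x' : G) _, hginv]
        · rw [EdigA_val, hval']
          exact Edig_relTransfer j hmon hlin hne ho d Xs _
  | zero =>
      intro d c
      have : EdigA j hlin hne ho d (c * 0) = 0 := by
        apply Subtype.ext
        rw [EdigA_val, mul_zero]
        exact Edig_zero (G := G) j d
      rw [this]
      exact Ideal.zero_mem _
  | add x y hx hy ihx ihy =>
      intro d c
      have : EdigA j hlin hne ho d (c * (x + y)) =
          EdigA j hlin hne ho d (c * x) + EdigA j hlin hne ho d (c * y) := by
        apply Subtype.ext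
        rw [EdigA_val, mul_add]
        have h1 : ((c * x + c * y : invSub G (MvPolynomial (Fin n) k) ⊤) :
            MvPolynomial (Fin n) k) =
            ((c * x : invSub G (MvPolynomial (Fin n) k) ⊤) : MvPolynomial (Fin n) k) +
              ((c * y : invSub G (MvPolynomial (Fin n) k) ⊤) : MvPolynomial (Fin n) k) := rfl
        rw [h1, Edig_add j hmon]
        rfl
      rw [this]
      exact Ideal.add_mem _ (ihx d c) (ihy d c)
  | smul a x hx ihx =>
      intro d c
      have : c * (a • x) = (c * a) * x := by
        rw [smul_eq_mul]
        ring
      rw [this]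
      exact ihx d (c * a)

end WithAll

end Alevel

end Statement6Aux


/-- for a `p`-group `G` in characteristic `p`, `dim V^G = l`, and any
set `𝒳` of proper subgroups of `G`, the images of the norms `N₁, …, N_l` of the
dual variables of the fixed basis vectors form a regular sequence in
`k[V]^G / I^G_𝒳`; in particular `depth(k[V]^G / I^G_𝒳) ≥ dim V^G`. -/
theorem normElt_regular_sequence_mod_transferIdeal
    (k : Type) [Field k] (p : ℕ) [Fact p.Prime] [CharP k p]
    (G : Type) [Group G] [Fintype G] (hG : IsPGroup p G)
    (n l : ℕ) (hl : l ≤ n)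
    [MulSemiringAction G (MvPolynomial (Fin n) k)]
    [SMulCommClass G k (MvPolynomial (Fin n) k)]
    -- the action of `G` on `k[V]` is induced by a linear action on `V`:
    (hlin : ∀ (σ : G) (i : Fin n), (σ • (X i : MvPolynomial (Fin n) k)).IsHomogeneous 1)
    -- `v₁, …, v_l` is a basis of `V^G`, with dual variables `x₁, …, x_l`:
    (hfix : ∀ (σ : G) (i : Fin n) (j : Fin n), (j : ℕ) < l →
      coeff (Finsupp.single j 1) (σ • (X i : MvPolynomial (Fin n) k)) =
        if i = j then 1 else 0)
    (𝓧 : Set (Subgroup G)) (h𝓧 : ∀ X ∈ 𝓧, X ≠ ⊤) :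
    ∀ j : Fin n, (j : ℕ) < l →
      ∀ r : (invSub G (MvPolynomial (Fin n) k) ⊤) ⧸
          transferIdealFamily G (MvPolynomial (Fin n) k) 𝓧,
        Ideal.Quotient.mk (transferIdealFamily G (MvPolynomial (Fin n) k) 𝓧)
            (normElt k n G j) * r ∈
          Ideal.span {y | ∃ i : Fin n, (i : ℕ) < (j : ℕ) ∧
            y = Ideal.Quotient.mk (transferIdealFamily G (MvPolynomial (Fin n) k) 𝓧)
              (normElt k n G i)} →
        r ∈ Ideal.span {y | ∃ i : Fin n, (i : ℕ) < (j : ℕ) ∧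
            y = Ideal.Quotient.mk (transferIdealFamily G (MvPolynomial (Fin n) k) 𝓧)
              (normElt k n G i)} := by
  intro j hj r hmem
  classical
  have hne : ∀ (σ : G) (i : Fin n), i ≠ j →
      coeff (Finsupp.single j 1) (σ • (X i : MvPolynomial (Fin n) k)) = 0 := by
    intro σ i hi
    rw [hfix σ i j hj]
    exact if_neg hi
  have ho : ∀ σ : G, coeff (Finsupp.single j 1) (σ • (X j : MvPolynomial (Fin n) k)) = 1 := by
    intro σ
    rw [hfix σ j j hj]
    exact if_pos rfl
  have hmon := Statement6Aux.NN_monic (G := G) j hlin ho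
  have hdeg := Statement6Aux.NN_deg (G := G) j hlin ho
  obtain ⟨r₀, rfl⟩ := Ideal.Quotient.mk_surjective r
  set I := transferIdealFamily G (MvPolynomial (Fin n) k) 𝓧 with hIdef
  have hset : {y | ∃ i : Fin n, (i : ℕ) < (j : ℕ) ∧
      y = Ideal.Quotient.mk I (normElt k n G i)} =
      (Ideal.Quotient.mk I) '' (Statement6Aux.S1 (k := k) (G := G) j) := by
    ext y
    constructor
    · rintro ⟨i, hi, rfl⟩
      exact ⟨normElt k n G i, ⟨i, hi, rfl⟩, rfl⟩
    · rintro ⟨x, ⟨i, hi, rfl⟩, rfl⟩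
      exact ⟨i, hi, rfl⟩
  rw [hset, ← Ideal.map_span, ← map_mul] at hmem
  obtain ⟨a, haI, ha⟩ :=
    (Ideal.mem_map_iff_of_surjective _ Ideal.Quotient.mk_surjective).1 hmem
  have hI2 : I = Ideal.span (Statement6Aux.S2 (k := k) (G := G) 𝓧) := rfl
  set 𝔄 := Ideal.span (Statement6Aux.S1 (k := k) (G := G) j ∪
    Statement6Aux.S2 (k := k) (G := G) 𝓧) with h𝔄
  have hNr : normElt k n G j * r₀ ∈ 𝔄 := by
    have hd : normElt k n G j * r₀ - a ∈ I := by
      have h0 := (Ideal.Quotient.eq).1 ha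
      have h2 := I.neg_mem h0
      simpa using h2
    have h1 : a ∈ 𝔄 := Ideal.span_mono Set.subset_union_left haI
    have h2 : normElt k n G j * r₀ - a ∈ 𝔄 := by
      rw [hI2] at hd
      exact Ideal.span_mono Set.subset_union_right hd
    have h3 := Ideal.add_mem _ h1 h2
    simpa using h3
  have hdig : ∀ d, Statement6Aux.EdigA j hlin hne ho d r₀ ∈ 𝔄 := by
    intro d
    have h3 := Statement6Aux.span_stable j hlin hne ho 𝓧 _ hNr (d + 1) 1
    rw [one_mul] at h3
    have h4 : Statement6Aux.EdigA j hlin hne ho (d + 1) (normElt k n G j * r₀) =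
        Statement6Aux.EdigA j hlin hne ho d r₀ := by
      apply Subtype.ext
      rw [Statement6Aux.EdigA_val, Statement6Aux.EdigA_val]
      have h5 : ((normElt k n G j * r₀ : invSub G (MvPolynomial (Fin n) k) ⊤) :
          MvPolynomial (Fin n) k) =
          Statement6Aux.NP (k := k) (G := G) j * (r₀ : MvPolynomial (Fin n) k) := rfl
      rw [h5]
      exact Statement6Aux.Edig_NP_shift j hmon hdeg d _
    rwa [h4] at h3
  have hr₀ : r₀ ∈ 𝔄 := by
    have hrepr := Statement6Aux.Edig_repr (G := G) j hmon hdeg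
      (r₀ : MvPolynomial (Fin n) k)
    have hrepr' : r₀ = ∑ d ∈ Finset.range
        ((Statement6Aux.φe j (r₀ : MvPolynomial (Fin n) k)).natDegree + 1),
        Statement6Aux.EdigA j hlin hne ho d r₀ * normElt k n G j ^ d := by
      apply Subtype.ext
      rw [AddSubmonoidClass.coe_finset_sum]
      conv_lhs => rw [hrepr]
      apply Finset.sum_congr rfl
      intro d _
      rw [MulMemClass.coe_mul, SubmonoidClass.coe_pow]
      rfl
    rw [hrepr']
    exact Ideal.sum_mem _ (fun d _ => Ideal.mul_mem_right _ _ (hdig d))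
  have hmk : Ideal.Quotient.mk I r₀ ∈ Ideal.map (Ideal.Quotient.mk I) 𝔄 :=
    Ideal.mem_map_of_mem _ hr₀
  rw [h𝔄, Ideal.span_union, Ideal.map_sup] at hmk
  have hmapI : Ideal.map (Ideal.Quotient.mk I)
      (Ideal.span (Statement6Aux.S2 (k := k) (G := G) 𝓧)) = ⊥ := by
    rw [← hI2]
    exact Ideal.map_quotient_self I
  rw [hmapI, sup_bot_eq, Ideal.map_span, ← hset] at hmk
  exact hmk
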